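/- If A: R → SL(2,R) is continuous and satisfies A(x+1/2) = T^{-1} A(x) T for all x, where T = diag(−1,1), and A is 1-periodic, then the topological degree of A (as a map from the circle T to SL(2,R)) equals 0. -/

import Mathlib

open Matrix Real

noncomputable def rotMat (θ : ℝ) : Matrix (Fin 2) (Fin 2) ℝ :=
  !![Real.cos (2 * π * θ), -Real.sin (2 * π * θ);
     Real.sin (2 * π * θ),  Real.cos (2 * π * θ)]

def HasDegreeSL (A : ℝ → Matrix (Fin 2) (Fin 2) ℝ) (l : ℤ) : Prop :=
  ∃ H : ℝ → ℝ → Matrix (Fin 2) (Fin 2) ℝ,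
    Continuous (fun p : ℝ × ℝ => H p.1 p.2) ∧
    (∀ s x, (H s x).det = 1) ∧
    (∀ s x, H s (x + 1) = H s x) ∧
    (∀ x, H 0 x = A x) ∧
    (∀ x, H 1 x = rotMat ((l : ℝ) * x))

lemma sum_arg_int (n : ℕ) (r : ℕ → ℂ) (h1 : ∀ k < n, ‖r k‖ = 1)
    (hprod : ∏ k ∈ Finset.range n, r k = 1) :
    ∃ m : ℤ, ∑ k ∈ Finset.range n, (r k).arg = 2 * π * m := by
  have he : Complex.exp (∑ k ∈ Finset.range n, ((r k).arg : ℂ) * Complex.I) = 1 := by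
    rw [Complex.exp_sum]
    rw [Finset.prod_congr rfl (fun k hk => ?_)] at hprod
    · exact hprod
    · have := Complex.norm_mul_exp_arg_mul_I (r k)
      rw [h1 k (Finset.mem_range.mp hk)] at this
      simpa using this.symm
  rw [Complex.exp_eq_one_iff] at he
  obtain ⟨m, hm⟩ := he
  refine ⟨m, ?_⟩
  have h3 : ((∑ k ∈ Finset.range n, (r k).arg : ℝ) : ℂ) * Complex.I
      = ((2 * π * m : ℝ) : ℂ) * Complex.I := by
    push_cast
    rw [← Finset.sum_mul] at hm
    rw [hm]; ring
  have h2 := mul_right_cancel₀ Complex.I_ne_zero h3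
  exact_mod_cast h2

lemma no_half_value {f : ℝ → ℝ} (hf : ContinuousOn f (Set.Icc 0 1))
    (h : ∀ s ∈ Set.Icc (0:ℝ) 1, ∃ m : ℤ, f s = m)
    {a b : ℝ} (ha : a ∈ Set.Icc (0:ℝ) 1) (hb : b ∈ Set.Icc (0:ℝ) 1)
    {m0 m1 : ℤ} (h0 : f a = m0) (h1 : f b = m1) (hlt : m0 < m1) : False := by
  have hsubset : Set.uIcc a b ⊆ Set.Icc 0 1 := Set.uIcc_subset_Icc ha hb
  have hsub := intermediate_value_uIcc (a := a) (b := b) (f := f) (hf.mono hsubset)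
  have hle : (m0 : ℝ) + 1 ≤ m1 := by exact_mod_cast hlt
  have ht : (m0 : ℝ) + 1/2 ∈ Set.uIcc (f a) (f b) := by
    rw [Set.mem_uIcc]
    left
    exact ⟨by rw [h0]; linarith, by rw [h1]; linarith⟩
  obtain ⟨s, hs, hst⟩ := hsub ht
  obtain ⟨m, hm⟩ := h s (hsubset hs)
  rw [hm] at hst
  have hcast : (2*m : ℤ) = 2 * m0 + 1 := by
    have : (2*m : ℝ) = 2 * m0 + 1 := by push_cast; linarith
    exact_mod_cast this
  omega

lemma int_valued_const {f : ℝ → ℝ} (hf : ContinuousOn f (Set.Icc 0 1))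
    (h : ∀ s ∈ Set.Icc (0:ℝ) 1, ∃ m : ℤ, f s = m) : f 0 = f 1 := by
  obtain ⟨m0, h0⟩ := h 0 (by norm_num)
  obtain ⟨m1, h1⟩ := h 1 (by norm_num)
  rcases lt_trichotomy m0 m1 with hlt | heq | hlt
  · exact absurd (no_half_value hf h (by norm_num) (by norm_num) h0 h1 hlt) id
  · rw [h0, h1, heq]
  · exact absurd (no_half_value hf h (by norm_num) (by norm_num) h1 h0 hlt) id

lemma T_rot_T_adj (a b : ℝ) :
    !![(-1 : ℝ), 0; 0, 1] * rotMat a * !![(-1 : ℝ), 0; 0, 1] * adjugate (rotMat b)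
      = rotMat (-a - b) := by
  have hc : 2 * π * (-a - b) = -(2*π*a) + -(2*π*b) := by ring
  ext i j
  fin_cases i <;> fin_cases j <;>
    simp [rotMat, Matrix.mul_fin_two, Matrix.adjugate_fin_two, hc,
      Real.cos_add, Real.sin_add, Real.cos_neg, Real.sin_neg] <;> ring

lemma re_pos_or_im_ne_zero {z : ℂ} (h1 : ‖z‖ = 1) (hne : z ≠ -1) :
    0 < z.re ∨ z.im ≠ 0 := by
  by_contra hcon
  push_neg at hcon
  obtain ⟨hre, him⟩ := hcon
  have hz : z = (z.re : ℂ) := Complex.ext rfl (by simp [him])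
  rw [hz, Complex.norm_real, Real.norm_eq_abs, abs_of_nonpos hre] at h1
  have : z.re = -1 := by linarith
  exact hne (by rw [hz, this]; norm_num)

/-- If a continuous 1-periodic `A : 𝕋 → SL(2,ℝ)` satisfies
`A(x + 1/2) = T⁻¹ A(x) T` with `T = diag(−1, 1)`, then its degree is `0`. -/
theorem degree_eq_zero_of_half_period_conjugation
    (A : ℝ → Matrix (Fin 2) (Fin 2) ℝ)
    (hc : Continuous A) (hdet : ∀ x, (A x).det = 1)
    (hper : ∀ x, A (x + 1) = A x)
    (hconj : ∀ x, A (x + 1/2) = (!![(-1 : ℝ), 0; 0, 1])⁻¹ * A x * !![(-1 : ℝ), 0; 0, 1])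
    (l : ℤ) (hdeg : HasDegreeSL A l) : l = 0 := by
  obtain ⟨H, Hcont, Hdet, Hper, H0, H1⟩ := hdeg
  set T : Matrix (Fin 2) (Fin 2) ℝ := !![(-1 : ℝ), 0; 0, 1] with hT
  have hTT : T * T = 1 := by
    rw [hT, Matrix.one_fin_two, Matrix.mul_fin_two]; norm_num
  have hTinv : T⁻¹ = T := Matrix.inv_eq_right_inv hTT
  have hconj' : ∀ x, A (x + 1/2) = T * A x * T := by
    intro x; rw [hconj x, hTinv]
  -- the combined homotopy J
  set J : ℝ × ℝ → Matrix (Fin 2) (Fin 2) ℝ :=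
    fun p => T * H p.1 p.2 * T * adjugate (H p.1 (p.2 + 1/2)) with hJdef
  have hJc : Continuous J := by
    have hH2 : Continuous (fun p : ℝ × ℝ => H p.1 (p.2 + 1/2)) :=
      Hcont.comp (continuous_fst.prodMk (continuous_snd.add continuous_const))
    exact ((continuous_const.matrix_mul Hcont).matrix_mul continuous_const).matrix_mul
      hH2.matrix_adjugate
  have hdetT : T.det = -1 := by rw [hT, Matrix.det_fin_two_of]; norm_num
  have hJdet : ∀ p, (J p).det = 1 := by
    intro p
    rw [hJdef]
    simp only [Matrix.det_mul, Matrix.det_adjugate, hdetT, Hdet]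
    norm_num
  have hJ0 : ∀ x : ℝ, J (0, x) = 1 := by
    intro x
    rw [hJdef]
    simp only [H0]
    rw [← hconj' x, Matrix.mul_adjugate, hdet, one_smul]
  have hJ1 : ∀ x : ℝ, J (1, x) = rotMat (-((l:ℝ) * x) - (l:ℝ) * (x + 1/2)) := by
    intro x
    rw [hJdef]
    simp only [H1]
    exact T_rot_T_adj _ _
  have hJper : ∀ s x : ℝ, J (s, x + 1) = J (s, x) := by
    intro s x
    rw [hJdef]
    simp only
    rw [Hper, show x + 1 + 1/2 = (x + 1/2) + 1 by ring, Hper]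
  -- the normalized first column as a unit complex number
  set c : ℝ × ℝ → ℂ := fun p => (J p 0 0 : ℝ) + (J p 1 0 : ℝ) * Complex.I with hcdef
  have hcne : ∀ p, c p ≠ 0 := by
    intro p hp
    have h00 : J p 0 0 = 0 := by
      have := congrArg Complex.re hp; simpa [hcdef] using this
    have h10 : J p 1 0 = 0 := by
      have := congrArg Complex.im hp; simpa [hcdef] using this
    have hd := hJdet p
    rw [Matrix.det_fin_two, h00, h10] at hd
    simp at hd
  have hccont : Continuous c := by
    rw [hcdef]
    exact (Complex.continuous_ofReal.comp (hJc.matrix_elem 0 0)).add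
      ((Complex.continuous_ofReal.comp (hJc.matrix_elem 1 0)).mul continuous_const)
  set u : ℝ × ℝ → ℂ := fun p => c p / ((‖c p‖ : ℝ) : ℂ) with hudef
  have huabs : ∀ p, ‖u p‖ = 1 := by
    intro p
    rw [hudef]
    simp only [norm_div, Complex.norm_real, Real.norm_eq_abs]
    rw [abs_of_nonneg (norm_nonneg (c p))]
    exact div_self (norm_ne_zero_iff.mpr (hcne p))
  have hucont : Continuous u := by
    rw [hudef]
    exact hccont.div (Complex.continuous_ofReal.comp (continuous_norm.comp hccont))
      (fun p => Complex.ofReal_ne_zero.mpr (norm_ne_zero_iff.mpr (hcne p)))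
  have huper : ∀ s x : ℝ, u (s, x + 1) = u (s, x) := by
    intro s x
    rw [hudef]
    simp only [hcdef, hJper s x]
  have hu0 : ∀ x : ℝ, u (0, x) = 1 := by
    intro x
    rw [hudef]
    simp only [hcdef, hJ0 x]
    norm_num [Matrix.one_apply]
  have hu1 : ∀ x : ℝ, u (1, x)
      = Complex.exp (((2 * π * (-((l:ℝ) * x) - (l:ℝ) * (x + 1/2))) : ℝ) * Complex.I) := by
    intro x
    rw [hudef]
    simp only [hcdef, hJ1 x]
    rw [show (rotMat (-((l:ℝ) * x) - (l:ℝ) * (x + 1/2))) 0 0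
        = Real.cos (2 * π * (-((l:ℝ) * x) - (l:ℝ) * (x + 1/2))) by simp [rotMat]]
    rw [show (rotMat (-((l:ℝ) * x) - (l:ℝ) * (x + 1/2))) 1 0
        = Real.sin (2 * π * (-((l:ℝ) * x) - (l:ℝ) * (x + 1/2))) by simp [rotMat]]
    rw [show ((Real.cos (2 * π * (-((l:ℝ) * x) - (l:ℝ) * (x + 1/2))) : ℝ) : ℂ)
        + ((Real.sin (2 * π * (-((l:ℝ) * x) - (l:ℝ) * (x + 1/2))) : ℝ) : ℂ) * Complex.I
        = Complex.exp (((2 * π * (-((l:ℝ) * x) - (l:ℝ) * (x + 1/2))) : ℝ) * Complex.I) by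
      rw [Complex.exp_mul_I, Complex.ofReal_cos, Complex.ofReal_sin]]
    rw [Complex.norm_exp_ofReal_mul_I]
    norm_num
  -- choose a fine partition
  have hK : IsCompact ((Set.Icc (0:ℝ) 1) ×ˢ (Set.Icc (0:ℝ) 2)) :=
    isCompact_Icc.prod isCompact_Icc
  have hUC := hK.uniformContinuousOn_of_continuous hucont.continuousOn
  rw [Metric.uniformContinuousOn_iff] at hUC
  obtain ⟨δ, hδpos, hδ⟩ := hUC 2 (by norm_num)
  obtain ⟨n, hn⟩ := exists_nat_gt (max (1/δ) (4*|(l:ℝ)|))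
  have h1δ : 1/δ < n := lt_of_le_of_lt (le_max_left _ _) hn
  have hnpos : (0:ℝ) < n := lt_trans (by positivity) h1δ
  have hnne : (n:ℝ) ≠ 0 := ne_of_gt hnpos
  have hln : 4*|(l:ℝ)| < n := lt_of_le_of_lt (le_max_right _ _) hn
  have hinv : 1/(n:ℝ) < δ := (one_div_lt hnpos hδpos).mpr h1δ
  have hmem : ∀ k : ℕ, k ≤ n → ((k:ℝ)/n) ∈ Set.Icc (0:ℝ) 2 := by
    intro k hk
    constructor
    · positivity
    · rw [div_le_iff₀ hnpos]
      have : (k:ℝ) ≤ n := by exact_mod_cast hk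
      linarith
  have hclose : ∀ s ∈ Set.Icc (0:ℝ) 1, ∀ k < n,
      dist (u (s, ((k:ℝ)+1)/n)) (u (s, (k:ℝ)/n)) < 2 := by
    intro s hs k hk
    have hk1 : ((k:ℝ)+1)/n ∈ Set.Icc (0:ℝ) 2 := by
      have := hmem (k+1) hk
      push_cast at this
      exact this
    have hk0 : ((k:ℝ))/n ∈ Set.Icc (0:ℝ) 2 := hmem k (le_of_lt hk)
    refine hδ (s, ((k:ℝ)+1)/n) ⟨hs, hk1⟩ (s, (k:ℝ)/n) ⟨hs, hk0⟩ ?_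
    rw [Prod.dist_eq]
    simp only [dist_self]
    rw [Real.dist_eq, show ((k:ℝ)+1)/n - (k:ℝ)/n = 1/n by field_simp; ring]
    rw [abs_of_pos (by positivity), max_eq_right (by positivity)]
    exact hinv
  -- the discrete winding sum
  have hstar_abs : ∀ z : ℂ, ‖star z‖ = ‖z‖ := by
    intro z; rw [← starRingEnd_apply]; exact Complex.norm_conj z
  have hstar_mul : ∀ z : ℂ, ‖z‖ = 1 → star z * z = 1 := by
    intro z hz
    rw [← starRingEnd_apply, mul_comm, Complex.mul_conj, Complex.normSq_eq_norm_sq, hz]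
    norm_num
  set r : ℝ → ℕ → ℂ := fun s k => u (s, ((k:ℝ)+1)/n) * star (u (s, (k:ℝ)/n)) with hrdef
  have habs_r : ∀ s k, ‖r s k‖ = 1 := by
    intro s k
    rw [hrdef]
    simp only [norm_mul, hstar_abs, huabs, mul_one]
  have hrne : ∀ s ∈ Set.Icc (0:ℝ) 1, ∀ k < n, r s k ≠ -1 := by
    intro s hs k hk hcon
    have hmulc : star (u (s, (k:ℝ)/n)) * u (s, (k:ℝ)/n) = 1 := hstar_mul _ (huabs _)
    have heq : u (s, ((k:ℝ)+1)/n) = - u (s, (k:ℝ)/n) := by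
      have h5 := congrArg (· * u (s, (k:ℝ)/n)) hcon
      simp only [hrdef] at h5
      rw [mul_assoc, hmulc, mul_one, neg_mul, one_mul] at h5
      exact h5
    have hd := hclose s hs k hk
    rw [Complex.dist_eq, heq,
      show - u (s, (k:ℝ)/n) - u (s, (k:ℝ)/n) = -(2 * u (s, (k:ℝ)/n)) by ring,
      norm_neg, norm_mul, huabs, Complex.norm_two, mul_one] at hd
    exact lt_irrefl _ hd
  have hprod : ∀ s : ℝ, ∏ k ∈ Finset.range n, r s k = 1 := by
    intro s
    have hself : ∀ y : ℝ, u (s, y) * star (u (s, y)) = 1 := by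
      intro y
      rw [mul_comm]; exact hstar_mul _ (huabs _)
    have htel : ∀ m : ℕ, ∏ k ∈ Finset.range m, r s k = u (s, (m:ℝ)/n) * star (u (s, 0)) := by
      intro m
      induction m with
      | zero =>
        simp only [Finset.range_zero, Finset.prod_empty, Nat.cast_zero, zero_div]
        exact (hself 0).symm
      | succ m ih =>
        rw [Finset.prod_range_succ, ih, hrdef]
        push_cast
        calc u (s, (m:ℝ)/n) * star (u (s, 0)) * (u (s, ((m:ℝ)+1)/n) * star (u (s, (m:ℝ)/n)))
            = (u (s, (m:ℝ)/n) * star (u (s, (m:ℝ)/n))) * (u (s, ((m:ℝ)+1)/n) * star (u (s, 0))) := by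
              ring
          _ = u (s, ((m:ℝ)+1)/n) * star (u (s, 0)) := by rw [hself]; ring
    rw [htel n, show ((n:ℝ))/n = 0 + 1 by field_simp; ring, huper s 0]
    exact hself 0
  have hrcont : ∀ k : ℕ, Continuous (fun s => r s k) := by
    intro k
    rw [hrdef]
    exact (hucont.comp (continuous_id.prodMk continuous_const)).mul
      (continuous_star.comp (hucont.comp (continuous_id.prodMk continuous_const)))
  set W : ℝ → ℝ := fun s => (∑ k ∈ Finset.range n, (r s k).arg) / (2*π) with hWdef
  have hWcont : ContinuousOn W (Set.Icc 0 1) := by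
    apply ContinuousOn.div_const
    apply continuousOn_finset_sum
    intro k hk
    intro s hs
    apply ContinuousAt.continuousWithinAt
    refine (Complex.continuousAt_arg ?_).comp (hrcont k).continuousAt
    rw [Complex.mem_slitPlane_iff]
    exact re_pos_or_im_ne_zero (habs_r s k) (hrne s hs k (Finset.mem_range.mp hk))
  have hWint : ∀ s ∈ Set.Icc (0:ℝ) 1, ∃ m : ℤ, W s = m := by
    intro s _
    obtain ⟨m, hm⟩ := sum_arg_int n (r s) (fun k _ => habs_r s k) (hprod s)
    refine ⟨m, ?_⟩
    rw [hWdef]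
    simp only
    rw [hm]
    field_simp
  have hW0 : W 0 = 0 := by
    rw [hWdef]
    simp only
    rw [Finset.sum_congr rfl (fun k _ => ?_), Finset.sum_const, smul_zero, zero_div]
    rw [hrdef]
    simp only [hu0]
    norm_num [Complex.arg_one]
  have hW1 : W 1 = -2*l := by
    have hβmem : (2*π*(-2*(l:ℝ)/n)) ∈ Set.Ioc (-π) π := by
      have habsβ : |2*π*(-2*(l:ℝ)/n)| < π := by
        rw [show 2*π*(-2*(l:ℝ)/n) = (4*π/n) * (-(l:ℝ)) by ring, abs_mul, abs_neg,
          abs_of_pos (by positivity : (0:ℝ) < 4*π/n), div_mul_eq_mul_div, div_lt_iff₀ hnpos]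
        nlinarith [pi_pos, hln, abs_nonneg ((l:ℝ))]
      obtain ⟨hb1, hb2⟩ := abs_lt.mp habsβ
      exact ⟨hb1, le_of_lt hb2⟩
    have hstar_exp : ∀ θ : ℝ, star (Complex.exp ((θ:ℂ) * Complex.I))
        = Complex.exp ((-θ:ℝ) * Complex.I) := by
      intro θ
      rw [← starRingEnd_apply, ← Complex.exp_conj, _root_.map_mul, Complex.conj_I, Complex.conj_ofReal]
      push_cast
      ring_nf
    have harg : ∀ k : ℕ, k < n → (r 1 k).arg = 2*π*(-2*(l:ℝ)/n) := by
      intro k hk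
      have hr1 : r 1 k = Complex.exp (((2*π*(-2*(l:ℝ)/n) : ℝ) : ℂ) * Complex.I) := by
        rw [hrdef]
        simp only [hu1]
        rw [hstar_exp, ← Complex.exp_add]
        congr 1
        push_cast
        have hnne' : (n:ℂ) ≠ 0 := by exact_mod_cast hnne
        field_simp
        ring
      rw [hr1, Complex.exp_mul_I]
      exact Complex.arg_cos_add_sin_mul_I hβmem
    rw [hWdef]
    simp only
    rw [Finset.sum_congr rfl (fun k hk => harg k (Finset.mem_range.mp hk)),
      Finset.sum_const, Finset.card_range, nsmul_eq_mul]
    field_simp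
  have hfin := int_valued_const hWcont hWint
  rw [hW0, hW1] at hfin
  have : (l:ℝ) = 0 := by linarith
  exact_mod_cast this
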